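/- For all ν > -1 and x > 0, the inequality I_ν(x)·I_{ν+1}(x) - I_{ν-1}(x)·I_{ν+2}(x) ≥ 0 holds, where I_ν is the modified Bessel function of the first kind. -/

import Mathlib

/-- Modified Bessel function of the first kind, via its power series (for `x > 0`). -/
noncomputable def besselI (ν x : ℝ) : ℝ :=
  ∑' n : ℕ, (x / 2) ^ (2 * (n : ℝ) + ν) / ((n.factorial : ℝ) * Real.Gamma (ν + n + 1))


open Finset Real

noncomputable def dp : ℕ → ℝ → ℝ
  | 0, _ => 1
  | (m+1), w => w * dp m (w - 1)

@[simp] lemma dp_zero (w : ℝ) : dp 0 w = 1 := rfl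
lemma dp_succ (m : ℕ) (w : ℝ) : dp (m+1) w = w * dp m (w - 1) := rfl

lemma dp_succ' (m : ℕ) : ∀ w : ℝ, dp (m+1) w = dp m w * (w - m) := by
  induction m with
  | zero => intro w; simp [dp_succ]
  | succ m ih =>
    intro w
    rw [dp_succ, ih (w-1), dp_succ]
    push_cast; ring

lemma dp_nonneg (m : ℕ) : ∀ w : ℝ, (m : ℝ) ≤ w + 1 → 0 ≤ dp m w := by
  induction m with
  | zero => intro w _; simp
  | succ m ih =>
    intro w hw
    rw [dp_succ]
    push_cast at hw
    have h1 : 0 ≤ w := by linarith [Nat.cast_nonneg (α := ℝ) m]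
    exact mul_nonneg h1 (ih (w-1) (by linarith))

lemma dp_vandermonde (k : ℕ) : ∀ a b : ℝ,
    ∑ i ∈ range (k+1), (k.choose i : ℝ) * dp i a * dp (k-i) b = dp k (a + b) := by
  induction k with
  | zero => intro a b; simp
  | succ k ih =>
    intro a b
    have peel : ∑ i ∈ range (k+2), ((k+1).choose i : ℝ) * dp i a * dp (k+1-i) b
        = (∑ i ∈ range (k+1), ((k+1).choose (i+1) : ℝ) * dp (i+1) a * dp (k-i) b)
          + dp (k+1) b := by
      rw [Finset.sum_range_succ' (fun i => ((k+1).choose i : ℝ) * dp i a * dp (k+1-i) b) (k+1)]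
      simp
    rw [peel]
    have split : ∀ i ∈ range (k+1),
        ((k+1).choose (i+1) : ℝ) * dp (i+1) a * dp (k-i) b
        = (k.choose i : ℝ) * (a * (dp i (a-1) * dp (k-i) b))
          + (k.choose (i+1) : ℝ) * dp (i+1) a * dp (k-i) b := by
      intro i hi
      rw [Nat.choose_succ_succ, dp_succ]
      push_cast; ring
    rw [Finset.sum_congr rfl split, Finset.sum_add_distrib]
    have h1 : ∑ i ∈ range (k+1), (k.choose i : ℝ) * (a * (dp i (a-1) * dp (k-i) b))
        = a * dp k (a - 1 + b) := by
      rw [← ih (a-1) b, Finset.mul_sum]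
      exact Finset.sum_congr rfl fun i hi => by ring
    have e1 : (∑ i ∈ range (k+1), (k.choose (i+1) : ℝ) * dp (i+1) a * dp (k-i) b) + dp (k+1) b
        = ∑ i ∈ range (k+2), (k.choose i : ℝ) * dp i a * dp (k+1-i) b := by
      rw [Finset.sum_range_succ' (fun i => (k.choose i : ℝ) * dp i a * dp (k+1-i) b) (k+1)]
      congr 1
      · refine Finset.sum_congr rfl fun i hi => ?_
        have h : k + 1 - (i+1) = k - i := by omega
        rw [h]
      · simp
    have h2 : ∑ i ∈ range (k+2), (k.choose i : ℝ) * dp i a * dp (k+1-i) b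
        = b * dp k (a + (b-1)) := by
      rw [Finset.sum_range_succ]
      simp only [Nat.choose_succ_self, Nat.cast_zero, zero_mul, mul_zero, add_zero]
      rw [← ih a (b-1), Finset.mul_sum]
      refine Finset.sum_congr rfl fun i hi => ?_
      have hik : i ≤ k := Nat.lt_succ_iff.mp (Finset.mem_range.mp hi)
      have h : k + 1 - i = (k - i) + 1 := by omega
      rw [h, dp_succ]
      ring
    rw [h1, add_assoc, e1, h2, dp_succ,
      show a + b - 1 = a - 1 + b by ring, show a + (b-1) = a - 1 + b by ring]
    ring


lemma inv_gamma (w : ℝ) (hw : -1 < w) :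
    ∀ m : ℕ, 0 < w + m → 1 / Real.Gamma w = dp m (w + m - 1) / Real.Gamma (w + m) := by
  intro m
  induction m with
  | zero => intro _; simp
  | succ m ih =>
    intro hm
    by_cases h : 0 < w + m
    · have hne : w + (m:ℝ) ≠ 0 := ne_of_gt h
      push_cast
      rw [show w + ((m:ℝ)+1) - 1 = w + m by ring,
          show w + ((m:ℝ)+1) = (w + m) + 1 by ring,
          Real.Gamma_add_one hne, dp_succ]
      rw [mul_div_mul_left _ _ hne]
      exact ih h
    · -- then m = 0 and w ∈ (-1, 0]
      have hm0 : m = 0 := by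
        by_contra hne
        have : 1 ≤ m := Nat.one_le_iff_ne_zero.mpr hne
        have : (1:ℝ) ≤ (m:ℝ) := by exact_mod_cast this
        exact h (by linarith)
      subst hm0
      simp only [Nat.cast_one, Nat.cast_zero] at *
      by_cases hw0 : w = 0
      · subst hw0; simp [Real.Gamma_zero, dp_succ]
      · have hGw : Real.Gamma w ≠ 0 := by
          apply Real.Gamma_ne_zero
          intro n
          cases n with
          | zero => simpa using hw0
          | succ n =>
            intro hc
            have : (0:ℝ) ≤ (n:ℝ) := Nat.cast_nonneg n
            rw [hc] at hw; push_cast at hw; linarith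
        have hG1 : Real.Gamma (w + 1) = w * Real.Gamma w := Real.Gamma_add_one hw0
        push_cast
        rw [hG1, show w + 1 - 1 = w by ring,
            show dp 1 w = w from by rw [dp_succ]; simp]
        field_simp

noncomputable def coefI (μ : ℝ) (n : ℕ) : ℝ := 1 / (n.factorial * Real.Gamma (μ + n + 1))

lemma gamma_le_gamma_add_nat {w : ℝ} (hw : 1 ≤ w) (m : ℕ) :
    Real.Gamma w ≤ Real.Gamma (w + m) := by
  induction m with
  | zero => simp
  | succ m ih =>
    have hpos : 0 < w + m := by
      have : (0:ℝ) ≤ m := Nat.cast_nonneg m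
      linarith
    have h1 : Real.Gamma (w + (m+1:ℕ)) = (w + m) * Real.Gamma (w + m) := by
      push_cast
      rw [show w + ((m:ℝ)+1) = (w + m) + 1 by ring]
      exact Real.Gamma_add_one (ne_of_gt hpos)
    rw [h1]
    have h2 : (1:ℝ) ≤ w + m := by
      have : (0:ℝ) ≤ m := Nat.cast_nonneg m
      linarith
    nlinarith [Real.Gamma_pos_of_pos hpos, ih]

lemma summable_coefI (μ : ℝ) (hμ : -2 < μ) (t : ℝ) :
    Summable (fun n => ‖coefI μ n * t ^ n‖) := by
  apply (summable_nat_add_iff 2).mp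
  have hG3 : 0 < Real.Gamma (μ + 3) := Real.Gamma_pos_of_pos (by linarith)
  apply Summable.of_nonneg_of_le (fun n => norm_nonneg _)
    (f := fun n => (1 / Real.Gamma (μ + 3)) * (|t| ^ (n+2) / (n+2).factorial))
  · intro n
    have hGn : Real.Gamma (μ + 3) ≤ Real.Gamma (μ + (n+2:ℕ) + 1) := by
      have := gamma_le_gamma_add_nat (w := μ + 3) (by linarith) n
      rw [show μ + 3 + (n:ℝ) = μ + ((n:ℝ)+2) + 1 by ring] at this
      push_cast
      exact this
    have hGnpos : 0 < Real.Gamma (μ + (n+2:ℕ) + 1) := lt_of_lt_of_le hG3 hGn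
    have hf : ((n+2).factorial : ℝ) ≠ 0 := by positivity
    have hg3 : Real.Gamma (μ + 3) ≠ 0 := ne_of_gt hG3
    rw [norm_mul, norm_pow, Real.norm_eq_abs, Real.norm_eq_abs]
    rw [coefI, abs_div, abs_one, abs_mul]
    rw [abs_of_pos hGnpos, Nat.abs_cast]
    have h2 : 1 / (((n+2).factorial : ℝ) * Real.Gamma (μ + ((n+2):ℕ) + 1))
        ≤ 1 / (((n+2).factorial : ℝ) * Real.Gamma (μ + 3)) :=
      one_div_le_one_div_of_le (by positivity)
        (mul_le_mul_of_nonneg_left hGn (Nat.cast_nonneg _))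
    calc 1 / (((n+2).factorial : ℝ) * Real.Gamma (μ + ((n+2):ℕ) + 1)) * |t|^(n+2)
        ≤ 1 / (((n+2).factorial : ℝ) * Real.Gamma (μ + 3)) * |t|^(n+2) :=
          mul_le_mul_of_nonneg_right h2 (pow_nonneg (abs_nonneg t) _)
      _ = 1 / Real.Gamma (μ+3) * (|t|^(n+2) / ((n+2).factorial : ℝ)) := by
          rw [div_mul_eq_mul_div, one_mul, one_div_mul_eq_div, div_div]
  · apply Summable.mul_left
    exact (Real.summable_pow_div_factorial |t|).comp_injective (add_left_injective 2)

lemma coefI_eq (μ : ℝ) (n : ℕ) :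
    coefI μ n = (1/(n.factorial:ℝ)) * (1/Real.Gamma (μ + n + 1)) := by
  rw [coefI, one_div_mul_one_div]

lemma coef_key (ν : ℝ) (hν : -1 < ν) (k : ℕ) :
    ∑ i ∈ range (k+1), coefI (ν-1) i * coefI (ν+2) (k-i)
      ≤ ∑ i ∈ range (k+1), coefI ν i * coefI (ν+1) (k-i) := by
  set z : ℝ := ν + k with hz
  have hk0 : (0:ℝ) ≤ k := Nat.cast_nonneg k
  have hz1 : 0 < z + 1 := by rw [hz]; linarith
  have hz1' : (0:ℝ) < ν + (k:ℝ) + 1 := by linarith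
  have hz3 : 0 < z + 3 := by linarith
  have hG1 : 0 < Real.Gamma (z+1) := Real.Gamma_pos_of_pos hz1
  have hG3 : 0 < Real.Gamma (z+3) := Real.Gamma_pos_of_pos hz3
  have hM : (0:ℝ) < (k.factorial : ℝ) * (Real.Gamma (z+1) * Real.Gamma (z+3)) := by positivity
  set M : ℝ := (k.factorial : ℝ) * (Real.Gamma (z+1) * Real.Gamma (z+3)) with hMdef
  -- termwise identities
  have hC : ∀ i, i ≤ k → (k.choose i : ℝ)
      = (k.factorial : ℝ) / ((i.factorial : ℝ) * ((k-i).factorial : ℝ)) := by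
    intro i hik
    have h := Nat.choose_mul_factorial_mul_factorial hik
    have h' : ((k.choose i : ℕ) : ℝ) * (i.factorial : ℝ) * ((k-i).factorial : ℝ)
        = (k.factorial : ℝ) := by exact_mod_cast congrArg (Nat.cast (R := ℝ)) h
    field_simp
    linarith [h']
  have termA : ∀ i, i ≤ k → M * (coefI ν i * coefI (ν+1) (k-i))
      = (k.choose i : ℝ) * (dp (k-i) z * dp (i+1) (z+2)) := by
    intro i hik
    have hik' : ((k-i:ℕ):ℝ) = (k:ℝ) - i := Nat.cast_sub hik
    have e1 : 1 / Real.Gamma (ν + i + 1) = dp (k-i) z / Real.Gamma (z+1) := by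
      have h := inv_gamma (ν + i + 1) (by have : (0:ℝ) ≤ i := Nat.cast_nonneg i; linarith)
        (k-i) (by rw [hik']; linarith)
      rw [hik', show ν + ↑i + 1 + ((k:ℝ) - ↑i) - 1 = z by rw [hz]; ring,
        show ν + ↑i + 1 + ((k:ℝ) - ↑i) = z + 1 by rw [hz]; ring] at h
      exact h
    have e2 : 1 / Real.Gamma ((ν+1) + (k-i:ℕ) + 1) = dp (i+1) (z+2) / Real.Gamma (z+3) := by
      have hikr : (i:ℝ) ≤ (k:ℝ) := Nat.cast_le.mpr hik
      have h := inv_gamma ((ν+1) + (k-i:ℕ) + 1)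
        (by rw [hik']; linarith) (i+1)
        (by rw [hik']; push_cast; linarith)
      rw [hik'] at h
      rw [show ((i+1:ℕ):ℝ) = (i:ℝ)+1 by push_cast; ring] at h
      rw [show ν + 1 + ((k:ℝ) - ↑i) + 1 + ((i:ℝ)+1) - 1 = z + 2 by rw [hz]; ring,
        show ν + 1 + ((k:ℝ) - ↑i) + 1 + ((i:ℝ)+1) = z + 3 by rw [hz]; ring] at h
      rw [hik']
      exact h
    rw [coefI_eq, coefI_eq, e1, e2, hC i hik, hMdef]
    have f1 : ((i.factorial : ℕ) : ℝ) ≠ 0 := by positivity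
    have f2 : (((k-i).factorial : ℕ) : ℝ) ≠ 0 := by positivity
    field_simp
  have termB : ∀ i, i ≤ k → M * (coefI (ν-1) i * coefI (ν+2) (k-i))
      = (k.choose i : ℝ) * (dp ((k-i)+1) z * dp i (z+2)) := by
    intro i hik
    have hik' : ((k-i:ℕ):ℝ) = (k:ℝ) - i := Nat.cast_sub hik
    have e1 : 1 / Real.Gamma ((ν-1) + i + 1) = dp ((k-i)+1) z / Real.Gamma (z+1) := by
      have h := inv_gamma ((ν-1) + i + 1) (by have : (0:ℝ) ≤ i := Nat.cast_nonneg i; linarith)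
        ((k-i)+1) (by rw [show (((k-i)+1:ℕ):ℝ) = ((k:ℝ) - i) + 1 by push_cast [hik']; ring]
                      linarith)
      rw [show (((k-i)+1:ℕ):ℝ) = ((k:ℝ) - i) + 1 by push_cast [hik']; ring] at h
      rw [show ν - 1 + ↑i + 1 + (((k:ℝ) - ↑i) + 1) - 1 = z by rw [hz]; ring,
        show ν - 1 + ↑i + 1 + (((k:ℝ) - ↑i) + 1) = z + 1 by rw [hz]; ring] at h
      exact h
    have e2 : 1 / Real.Gamma ((ν+2) + (k-i:ℕ) + 1) = dp i (z+2) / Real.Gamma (z+3) := by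
      have hikr : (i:ℝ) ≤ (k:ℝ) := Nat.cast_le.mpr hik
      have h := inv_gamma ((ν+2) + (k-i:ℕ) + 1)
        (by rw [hik']; linarith) i
        (by rw [hik']; linarith)
      rw [hik'] at h
      rw [show ν + 2 + ((k:ℝ) - ↑i) + 1 + (i:ℝ) - 1 = z + 2 by rw [hz]; ring,
        show ν + 2 + ((k:ℝ) - ↑i) + 1 + (i:ℝ) = z + 3 by rw [hz]; ring] at h
      rw [hik']
      exact h
    rw [coefI_eq, coefI_eq, e1, e2, hC i hik, hMdef]
    have f1 : ((i.factorial : ℕ) : ℝ) ≠ 0 := by positivity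
    have f2 : (((k-i).factorial : ℕ) : ℝ) ≠ 0 := by positivity
    field_simp
  -- summed identities
  have hA : M * ∑ i ∈ range (k+1), coefI ν i * coefI (ν+1) (k-i)
      = (z+2) * dp k (2*z+1) := by
    rw [Finset.mul_sum]
    rw [Finset.sum_congr rfl (fun i hi => termA i (Nat.lt_succ_iff.mp (Finset.mem_range.mp hi)))]
    have : ∀ i ∈ range (k+1), (k.choose i : ℝ) * (dp (k-i) z * dp (i+1) (z+2))
        = (z+2) * ((k.choose i : ℝ) * dp i (z+1) * dp (k-i) z) := by
      intro i hi
      rw [dp_succ, show z + 2 - 1 = z + 1 by ring]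
      ring
    rw [Finset.sum_congr rfl this, ← Finset.mul_sum, dp_vandermonde k (z+1) z,
      show z + 1 + z = 2*z+1 by ring]
  have hB : M * ∑ i ∈ range (k+1), coefI (ν-1) i * coefI (ν+2) (k-i)
      = z * dp k (2*z+1) := by
    rw [Finset.mul_sum]
    rw [Finset.sum_congr rfl (fun i hi => termB i (Nat.lt_succ_iff.mp (Finset.mem_range.mp hi)))]
    have : ∀ i ∈ range (k+1), (k.choose i : ℝ) * (dp ((k-i)+1) z * dp i (z+2))
        = z * ((k.choose i : ℝ) * dp i (z+2) * dp (k-i) (z-1)) := by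
      intro i hi
      rw [dp_succ]
      ring
    rw [Finset.sum_congr rfl this, ← Finset.mul_sum, dp_vandermonde k (z+2) (z-1),
      show z + 2 + (z-1) = 2*z+1 by ring]
  have hdp : 0 ≤ dp k (2*z+1) := by
    apply dp_nonneg
    rw [hz]; linarith
  have : M * ∑ i ∈ range (k+1), coefI (ν-1) i * coefI (ν+2) (k-i)
      ≤ M * ∑ i ∈ range (k+1), coefI ν i * coefI (ν+1) (k-i) := by
    rw [hA, hB]
    nlinarith [hdp]
  exact le_of_mul_le_mul_left this hM

lemma besselI_eq (ν x : ℝ) (hx : 0 < x) :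
    besselI ν x = (x/2) ^ ν * ∑' n : ℕ, coefI ν n * ((x/2)^2)^n := by
  rw [besselI, ← tsum_mul_left]
  congr 1
  funext n
  have h2 : (0:ℝ) < x/2 := by linarith
  rw [coefI]
  rw [show (2*(n:ℝ) + ν) = ν + ((2*n : ℕ) : ℝ) by push_cast; ring]
  rw [Real.rpow_add h2, Real.rpow_natCast, pow_mul]
  ring

theorem stmt_13 (ν : ℝ) (hν : -1 < ν) (x : ℝ) (hx : 0 < x) :
    besselI ν x * besselI (ν + 1) x - besselI (ν - 1) x * besselI (ν + 2) x ≥ 0 := by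
  have h2 : (0:ℝ) < x/2 := by linarith
  set t : ℝ := (x/2)^2 with ht
  have ht0 : (0:ℝ) ≤ t := sq_nonneg _
  -- summability
  have S0 := summable_coefI ν (by linarith) t
  have S1 := summable_coefI (ν+1) (by linarith) t
  have Sm := summable_coefI (ν-1) (by linarith) t
  have S2 := summable_coefI (ν+2) (by linarith) t
  -- Cauchy products
  have prodA : (∑' n : ℕ, coefI ν n * t^n) * (∑' n : ℕ, coefI (ν+1) n * t^n)
      = ∑' k : ℕ, t^k * ∑ i ∈ Finset.range (k+1), coefI ν i * coefI (ν+1) (k-i) := by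
    rw [tsum_mul_tsum_eq_tsum_sum_antidiagonal_of_summable_norm S0 S1]
    congr 1
    funext k
    rw [Finset.Nat.sum_antidiagonal_eq_sum_range_succ_mk, Finset.mul_sum]
    refine Finset.sum_congr rfl fun i hi => ?_
    have hik : i ≤ k := Nat.lt_succ_iff.mp (Finset.mem_range.mp hi)
    have : t^i * t^(k-i) = t^k := by
      rw [← pow_add]
      congr 1
      omega
    calc coefI ν i * t^i * (coefI (ν+1) (k-i) * t^(k-i))
        = (coefI ν i * coefI (ν+1) (k-i)) * (t^i * t^(k-i)) := by ring
      _ = t^k * (coefI ν i * coefI (ν+1) (k-i)) := by rw [this]; ring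
  have prodB : (∑' n : ℕ, coefI (ν-1) n * t^n) * (∑' n : ℕ, coefI (ν+2) n * t^n)
      = ∑' k : ℕ, t^k * ∑ i ∈ Finset.range (k+1), coefI (ν-1) i * coefI (ν+2) (k-i) := by
    rw [tsum_mul_tsum_eq_tsum_sum_antidiagonal_of_summable_norm Sm S2]
    congr 1
    funext k
    rw [Finset.Nat.sum_antidiagonal_eq_sum_range_succ_mk, Finset.mul_sum]
    refine Finset.sum_congr rfl fun i hi => ?_
    have hik : i ≤ k := Nat.lt_succ_iff.mp (Finset.mem_range.mp hi)
    have : t^i * t^(k-i) = t^k := by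
      rw [← pow_add]
      congr 1
      omega
    calc coefI (ν-1) i * t^i * (coefI (ν+2) (k-i) * t^(k-i))
        = (coefI (ν-1) i * coefI (ν+2) (k-i)) * (t^i * t^(k-i)) := by ring
      _ = t^k * (coefI (ν-1) i * coefI (ν+2) (k-i)) := by rw [this]; ring
  -- rewrite bessel products
  have eA : besselI ν x * besselI (ν + 1) x
      = (x/2) ^ (2*ν+1) * ((∑' n : ℕ, coefI ν n * t^n) * (∑' n : ℕ, coefI (ν+1) n * t^n)) := by
    rw [besselI_eq ν x hx, besselI_eq (ν+1) x hx, ← ht,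
      show (2*ν+1) = ν + (ν+1) by ring, Real.rpow_add h2 ν (ν+1), mul_mul_mul_comm]
  have eB : besselI (ν - 1) x * besselI (ν + 2) x
      = (x/2) ^ (2*ν+1) * ((∑' n : ℕ, coefI (ν-1) n * t^n) * (∑' n : ℕ, coefI (ν+2) n * t^n)) := by
    rw [besselI_eq (ν-1) x hx, besselI_eq (ν+2) x hx, ← ht,
      show (2*ν+1) = (ν-1) + (ν+2) by ring, Real.rpow_add h2 (ν-1) (ν+2), mul_mul_mul_comm]
  rw [eA, eB, ← mul_sub, prodA, prodB]
  apply mul_nonneg (Real.rpow_nonneg (le_of_lt h2) _)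
  -- summability of coefficient series
  have SA : Summable (fun k : ℕ => t^k * ∑ i ∈ Finset.range (k+1), coefI ν i * coefI (ν+1) (k-i)) := by
    have := (summable_norm_sum_mul_antidiagonal_of_summable_norm S0 S1).of_norm
    apply this.congr
    intro k
    rw [Finset.Nat.sum_antidiagonal_eq_sum_range_succ_mk, Finset.mul_sum]
    refine Finset.sum_congr rfl fun i hi => ?_
    have hik : i ≤ k := Nat.lt_succ_iff.mp (Finset.mem_range.mp hi)
    have hp : t^i * t^(k-i) = t^k := by
      rw [← pow_add]; congr 1; omega
    calc coefI ν i * t^i * (coefI (ν+1) (k-i) * t^(k-i))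
        = (coefI ν i * coefI (ν+1) (k-i)) * (t^i * t^(k-i)) := by ring
      _ = t^k * (coefI ν i * coefI (ν+1) (k-i)) := by rw [hp]; ring
  have SB : Summable (fun k : ℕ => t^k * ∑ i ∈ Finset.range (k+1), coefI (ν-1) i * coefI (ν+2) (k-i)) := by
    have := (summable_norm_sum_mul_antidiagonal_of_summable_norm Sm S2).of_norm
    apply this.congr
    intro k
    rw [Finset.Nat.sum_antidiagonal_eq_sum_range_succ_mk, Finset.mul_sum]
    refine Finset.sum_congr rfl fun i hi => ?_
    have hik : i ≤ k := Nat.lt_succ_iff.mp (Finset.mem_range.mp hi)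
    have hp : t^i * t^(k-i) = t^k := by
      rw [← pow_add]; congr 1; omega
    calc coefI (ν-1) i * t^i * (coefI (ν+2) (k-i) * t^(k-i))
        = (coefI (ν-1) i * coefI (ν+2) (k-i)) * (t^i * t^(k-i)) := by ring
      _ = t^k * (coefI (ν-1) i * coefI (ν+2) (k-i)) := by rw [hp]; ring
  rw [← Summable.tsum_sub SA SB]
  apply tsum_nonneg
  intro k
  rw [← mul_sub]
  apply mul_nonneg (pow_nonneg ht0 k)
  have := coef_key ν hν k
  linarith
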